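/- (Eckart–Young optimality, spectral norm) Let A ∈ ℝ^{N×M} have singular values s_1 ≥ … ≥ s_d ≥ 0, d = min(N,M), and let 0 < t < rank(A) with rank-t truncated SVD A_t. Then for every matrix B ∈ ℝ^{N×M} with rank(B) ≤ t one has ‖A − B‖₂ ≥ s_{t+1} = ‖A − A_t‖₂; i.e., A_t is a best rank-t approximation of A in the spectral norm. -/

import Mathlib

open Matrix

/-- A singular value decomposition of `A`: `U`, `V` orthogonal, `A = U * S * Vᵀ`,
`S` zero off the diagonal with nonincreasing nonnegative diagonal entries. -/
def IsSVD {N M : ℕ} (A : Matrix (Fin N) (Fin M) ℝ)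
    (U : Matrix (Fin N) (Fin N) ℝ) (S : Matrix (Fin N) (Fin M) ℝ)
    (V : Matrix (Fin M) (Fin M) ℝ) : Prop :=
  Uᵀ * U = 1 ∧ Vᵀ * V = 1 ∧ A = U * S * Vᵀ ∧
  (∀ (i : Fin N) (j : Fin M), (i : ℕ) ≠ (j : ℕ) → S i j = 0) ∧
  (∀ (i : Fin N) (j : Fin M), (i : ℕ) = (j : ℕ) → 0 ≤ S i j) ∧
  (∀ (i i' : Fin N) (j j' : Fin M), (i : ℕ) = (j : ℕ) → (i' : ℕ) = (j' : ℕ) →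
    (i : ℕ) ≤ (i' : ℕ) → S i' j' ≤ S i j)

/-- The spectral (ℓ²-operator) norm of a matrix: the operator norm of the induced linear
map between Euclidean spaces. -/
noncomputable def matrixSpectralNorm {N M : ℕ} (A : Matrix (Fin N) (Fin M) ℝ) : ℝ :=
  ‖LinearMap.toContinuousLinearMap (Matrix.toEuclideanLin A)‖

/-- The Frobenius norm of a matrix. -/
noncomputable def frobeniusNorm {N M : ℕ} (A : Matrix (Fin N) (Fin M) ℝ) : ℝ :=
  Real.sqrt (∑ i, ∑ j, |A i j| ^ 2)

/-- The rank-`t` truncated SVD `A_t = ∑_{i=1}^t sᵢ • uᵢ vᵢᵀ` built from the SVD factors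
`U`, `S`, `V`. -/
noncomputable def svdTruncation {N M : ℕ} (U : Matrix (Fin N) (Fin N) ℝ)
    (S : Matrix (Fin N) (Fin M) ℝ) (V : Matrix (Fin M) (Fin M) ℝ)
    (t : ℕ) (ht : t ≤ min N M) : Matrix (Fin N) (Fin M) ℝ :=
  ∑ i : Fin t,
    S ⟨i, lt_of_lt_of_le i.isLt (ht.trans (min_le_left N M))⟩
      ⟨i, lt_of_lt_of_le i.isLt (ht.trans (min_le_right N M))⟩ •
    vecMulVec (fun a => U a ⟨i, lt_of_lt_of_le i.isLt (ht.trans (min_le_left N M))⟩)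
      (fun b => V b ⟨i, lt_of_lt_of_le i.isLt (ht.trans (min_le_right N M))⟩)

/-! ### Auxiliary lemmas -/

lemma EY.norm_euc {n : ℕ} (x : EuclideanSpace ℝ (Fin n)) :
    ‖x‖ = Real.sqrt (∑ i, x i ^ 2) := by
  rw [EuclideanSpace.norm_eq]
  congr 1
  refine Finset.sum_congr rfl fun i _ => ?_
  rw [Real.norm_eq_abs, sq_abs]

lemma EY.spectralNorm_le_of {N M : ℕ} (A : Matrix (Fin N) (Fin M) ℝ) {c : ℝ} (hc : 0 ≤ c)
    (h : ∀ x : Fin M → ℝ, ∑ i, (A *ᵥ x) i ^ 2 ≤ c ^ 2 * ∑ j, x j ^ 2) :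
    matrixSpectralNorm A ≤ c := by
  apply ContinuousLinearMap.opNorm_le_bound _ hc
  intro x
  have h1 : ‖(LinearMap.toContinuousLinearMap (Matrix.toEuclideanLin A)) x‖
      = Real.sqrt (∑ i, (A *ᵥ (WithLp.equiv 2 (Fin M → ℝ) x)) i ^ 2) := EY.norm_euc _
  rw [h1, EY.norm_euc]
  calc Real.sqrt (∑ i, (A *ᵥ (WithLp.equiv 2 (Fin M → ℝ) x)) i ^ 2)
      ≤ Real.sqrt (c ^ 2 * ∑ j, (WithLp.equiv 2 (Fin M → ℝ) x) j ^ 2) :=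
        Real.sqrt_le_sqrt (h _)
    _ = c * Real.sqrt (∑ j, x j ^ 2) := by
        rw [Real.sqrt_mul (sq_nonneg c), Real.sqrt_sq hc]; rfl

lemma EY.le_spectralNorm_of {N M : ℕ} (A : Matrix (Fin N) (Fin M) ℝ) {c : ℝ} (hc : 0 ≤ c)
    (x : Fin M → ℝ) (hx : x ≠ 0)
    (h : c ^ 2 * ∑ j, x j ^ 2 ≤ ∑ i, (A *ᵥ x) i ^ 2) :
    c ≤ matrixSpectralNorm A := by
  set L := LinearMap.toContinuousLinearMap (Matrix.toEuclideanLin A)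
  set y : EuclideanSpace ℝ (Fin M) := (WithLp.equiv 2 (Fin M → ℝ)).symm x
  have hLy : ‖L y‖ = Real.sqrt (∑ i, (A *ᵥ x) i ^ 2) := EY.norm_euc _
  have hy : ‖y‖ = Real.sqrt (∑ j, x j ^ 2) := EY.norm_euc _
  have hcy : c * ‖y‖ ≤ ‖L y‖ := by
    rw [hLy, hy, ← Real.sqrt_sq hc, ← Real.sqrt_mul (sq_nonneg c)]
    exact Real.sqrt_le_sqrt h
  have hyne : ‖y‖ ≠ 0 := by
    simp only [norm_ne_zero_iff]
    intro hy0
    exact hx (by simpa [y] using congrArg (WithLp.equiv 2 (Fin M → ℝ)) hy0)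
  have hle := hcy.trans (L.le_opNorm y)
  have hypos : 0 < ‖y‖ := lt_of_le_of_ne (norm_nonneg _) (Ne.symm hyne)
  show c ≤ ‖L‖
  exact le_of_mul_le_mul_right hle hypos

lemma EY.sumsq_mulVec_orth {n : ℕ} {U : Matrix (Fin n) (Fin n) ℝ} (hU : Uᵀ * U = 1)
    (y : Fin n → ℝ) : ∑ i, (U *ᵥ y) i ^ 2 = ∑ i, y i ^ 2 := by
  have h1 : ∑ i, (U *ᵥ y) i ^ 2 = (U *ᵥ y) ⬝ᵥ (U *ᵥ y) := by
    simp [dotProduct, sq]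
  have h2 : (U *ᵥ y) ⬝ᵥ (U *ᵥ y) = y ⬝ᵥ y := by
    rw [dotProduct_mulVec, ← mulVec_transpose, mulVec_mulVec, hU, one_mulVec]
  rw [h1, h2]; simp [dotProduct, sq]

lemma EY.sum_eq_sum_castLE {m n : ℕ} (hm : m ≤ n) (f : Fin n → ℝ)
    (hf : ∀ i : Fin n, m ≤ (i : ℕ) → f i = 0) :
    ∑ i, f i = ∑ k : Fin m, f (Fin.castLE hm k) := by
  have hmap := Finset.sum_map Finset.univ (Fin.castLEEmb hm) f
  simp only [Fin.castLEEmb_apply] at hmap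
  rw [← hmap]
  symm
  apply Finset.sum_subset (Finset.subset_univ _)
  intro x _ hx
  apply hf
  by_contra hlt
  push_neg at hlt
  exact hx (Finset.mem_map.mpr ⟨⟨x, hlt⟩, Finset.mem_univ _, by simp [Fin.castLEEmb]⟩)

lemma EY.sum_castLE_le {m n : ℕ} (hm : m ≤ n) (f : Fin n → ℝ) (hf : ∀ i, 0 ≤ f i) :
    ∑ k : Fin m, f (Fin.castLE hm k) ≤ ∑ i, f i := by
  have hmap := Finset.sum_map Finset.univ (Fin.castLEEmb hm) f
  simp only [Fin.castLEEmb_apply] at hmap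
  rw [← hmap]
  exact Finset.sum_le_sum_of_subset_of_nonneg (Finset.subset_univ _) fun i _ _ => hf i

lemma EY.mulVec_diag {N M : ℕ} {D : Matrix (Fin N) (Fin M) ℝ}
    (hD : ∀ (i : Fin N) (j : Fin M), (i : ℕ) ≠ (j : ℕ) → D i j = 0)
    (c : Fin M → ℝ) (i : Fin N) :
    (D *ᵥ c) i = if h : (i : ℕ) < M then D i ⟨i, h⟩ * c ⟨i, h⟩ else 0 := by
  have hmv : (D *ᵥ c) i = ∑ j, D i j * c j := rfl
  rw [hmv]
  split_ifs with h
  · exact Finset.sum_eq_single (M := ℝ) (⟨(i : ℕ), h⟩ : Fin M)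
      (fun j _ hj => by rw [hD i j (fun he => hj (Fin.ext he.symm)), zero_mul])
      (fun hni => absurd (Finset.mem_univ _) hni)
  · apply Finset.sum_eq_zero
    intro j _
    rw [hD i j (fun he => h (he ▸ j.isLt)), zero_mul]

lemma EY.sumsq_mulVec_diag {N M : ℕ} {D : Matrix (Fin N) (Fin M) ℝ}
    (hD : ∀ (i : Fin N) (j : Fin M), (i : ℕ) ≠ (j : ℕ) → D i j = 0)
    (c : Fin M → ℝ) :
    ∑ i, (D *ᵥ c) i ^ 2 = ∑ k : Fin (min N M),
      (D (Fin.castLE (min_le_left N M) k) (Fin.castLE (min_le_right N M) k) *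
        c (Fin.castLE (min_le_right N M) k)) ^ 2 := by
  rw [EY.sum_eq_sum_castLE (min_le_left N M) (fun i => (D *ᵥ c) i ^ 2)
    (fun i hi => by
      simp only [EY.mulVec_diag hD]
      rw [dif_neg (by omega)]
      ring)]
  refine Finset.sum_congr rfl fun k _ => ?_
  simp only [EY.mulVec_diag hD]
  rw [dif_pos (show ((Fin.castLE (min_le_left N M) k : Fin N) : ℕ) < M from
    lt_of_lt_of_le k.isLt (min_le_right N M))]
  rfl

lemma EY.sandwich_single {N M : ℕ} (U : Matrix (Fin N) (Fin N) ℝ) (V : Matrix (Fin M) (Fin M) ℝ)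
    (i₀ : Fin N) (j₀ : Fin M) (c : ℝ) (a : Fin N) (b : Fin M) :
    (U * Matrix.single i₀ j₀ c * Vᵀ) a b = c * (U a i₀ * V b j₀) := by
  simp [Matrix.mul_apply, Matrix.single, ite_and, mul_ite, ite_mul, Finset.sum_ite_eq,
    Finset.sum_ite_eq']
  ring

/-- Eckart–Young optimality, spectral norm: every matrix `B` of rank at
most `t` satisfies `‖A − B‖₂ ≥ s_{t+1} = ‖A − A_t‖₂`, i.e. the rank-`t` truncated SVD is a
best rank-`t` approximation in the spectral norm. -/
theorem eckart_young_optimality_spectral {N M : ℕ}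
    (A : Matrix (Fin N) (Fin M) ℝ) (U : Matrix (Fin N) (Fin N) ℝ)
    (S : Matrix (Fin N) (Fin M) ℝ) (V : Matrix (Fin M) (Fin M) ℝ)
    (h : IsSVD A U S V) (t : ℕ) (ht0 : 0 < t) (htr : t < A.rank) (ht : t < min N M) :
    (∀ B : Matrix (Fin N) (Fin M) ℝ, B.rank ≤ t →
      S ⟨t, lt_of_lt_of_le ht (min_le_left N M)⟩ ⟨t, lt_of_lt_of_le ht (min_le_right N M)⟩ ≤
        matrixSpectralNorm (A - B)) ∧
    matrixSpectralNorm (A - svdTruncation U S V t ht.le) =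
      S ⟨t, lt_of_lt_of_le ht (min_le_left N M)⟩ ⟨t, lt_of_lt_of_le ht (min_le_right N M)⟩ := by
  obtain ⟨hU, hV, hA, hoff, hnn, hmono⟩ := h
  have htN : t < N := lt_of_lt_of_le ht (min_le_left N M)
  have htM : t < M := lt_of_lt_of_le ht (min_le_right N M)
  set tN : Fin N := ⟨t, htN⟩
  set tM : Fin M := ⟨t, htM⟩
  set st : ℝ := S tN tM with hst
  have hst0 : 0 ≤ st := hnn tN tM rfl
  have hVV : V * Vᵀ = 1 := mul_eq_one_comm.mp hV
  have hVt : (Vᵀ)ᵀ * Vᵀ = 1 := by rw [transpose_transpose]; exact hVV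
  -- the key estimate for A - B with rank B ≤ t
  constructor
  · intro B hB
    -- the span of the first t+1 columns of V
    have ht1M : t + 1 ≤ M := htM
    set f : Fin (t + 1) → (Fin M → ℝ) := fun k => (fun a => V a (Fin.castLE ht1M k)) with hf
    have hVunit : IsUnit V := ⟨⟨V, Vᵀ, hVV, hV⟩, rfl⟩
    have hli : LinearIndependent ℝ f := by
      have h1 : LinearIndependent ℝ (fun j => Vᵀ j) :=
        Matrix.linearIndependent_cols_iff_isUnit.mpr hVunit
      exact h1.comp (Fin.castLE ht1M) (Fin.castLE_injective ht1M)
    set W : Submodule ℝ (Fin M → ℝ) := Submodule.span ℝ (Set.range f) with hW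
    have hWrank : Module.finrank ℝ W = t + 1 := by
      rw [hW, finrank_span_eq_card hli, Fintype.card_fin]
    set K : Submodule ℝ (Fin M → ℝ) := LinearMap.ker B.mulVecLin with hK
    have hranknull : B.rank + Module.finrank ℝ K =  M := by
      have := LinearMap.finrank_range_add_finrank_ker B.mulVecLin
      rwa [Module.finrank_pi, Fintype.card_fin] at this
    -- W and K intersect nontrivially
    have hnd : ¬ Disjoint W K := by
      intro hd
      have hle := Submodule.finrank_add_finrank_le_of_disjoint hd
      rw [hWrank, Module.finrank_pi, Fintype.card_fin] at hle
      omega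
    rw [disjoint_iff] at hnd
    obtain ⟨w, hwmem, hwne⟩ := Submodule.ne_bot_iff _ |>.mp hnd
    obtain ⟨hwW, hwK⟩ := Submodule.mem_inf.mp hwmem
    -- write w = V *ᵥ c with c supported on indices < t+1
    obtain ⟨a, ha⟩ := (Submodule.mem_span_range_iff_exists_fun ℝ).mp hwW
    set c : Fin M → ℝ := fun j => if hj : (j : ℕ) < t + 1 then a ⟨j, hj⟩ else 0 with hc
    have hcsupp : ∀ j : Fin M, t + 1 ≤ (j : ℕ) → c j = 0 := by
      intro j hj
      show (if hj : (j : ℕ) < t + 1 then a ⟨j, hj⟩ else 0) = 0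
      rw [dif_neg (by omega)]
    have hwc : w = V *ᵥ c := by
      funext i
      rw [← ha]
      have hmv : (V *ᵥ c) i = ∑ j, V i j * c j := rfl
      rw [hmv, EY.sum_eq_sum_castLE ht1M (fun j => V i j * c j)
        (fun j hj => by show V i j * c j = 0; rw [hcsupp j hj, mul_zero])]
      simp only [Finset.sum_apply, Pi.smul_apply, smul_eq_mul]
      refine Finset.sum_congr rfl fun k _ => ?_
      show a k * f k i = V i (Fin.castLE ht1M k) * c (Fin.castLE ht1M k)
      have hck : c (Fin.castLE ht1M k) = a k := by
        show (if hj : ((Fin.castLE ht1M k : Fin M) : ℕ) < t + 1 then a ⟨_, hj⟩ else 0) = a k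
        rw [dif_pos (show ((Fin.castLE ht1M k : Fin M) : ℕ) < t + 1 from k.isLt)]
        exact congrArg a (Fin.ext rfl)
      rw [hck]
      show a k * V i (Fin.castLE ht1M k) = V i (Fin.castLE ht1M k) * a k
      ring
    -- Vᵀ w = c
    have hVtw : Vᵀ *ᵥ w = c := by
      rw [hwc, mulVec_mulVec, hV, one_mulVec]
    -- (A - B) w = A w = U (S c)
    have hBw : B *ᵥ w = 0 := hwK
    have hABw : (A - B) *ᵥ w = U *ᵥ (S *ᵥ c) := by
      rw [sub_mulVec, hBw, sub_zero, hA, ← hVtw, mulVec_mulVec, mulVec_mulVec,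
        ← mulVec_mulVec, ← mulVec_mulVec, hVtw]
    apply EY.le_spectralNorm_of (A - B) hst0 w hwne
    rw [hABw, EY.sumsq_mulVec_orth hU, EY.sumsq_mulVec_diag hoff]
    -- ∑ j, w j ^2 = ∑ j, c j ^2 = ∑ over min N M
    have hw2 : ∑ j, w j ^ 2 = ∑ k : Fin (min N M), c (Fin.castLE (min_le_right N M) k) ^ 2 := by
      have h1 : ∑ j, c j ^ 2 = ∑ j, (Vᵀ *ᵥ w) j ^ 2 := by rw [hVtw]
      have h2 : ∑ j, (Vᵀ *ᵥ w) j ^ 2 = ∑ j, w j ^ 2 := EY.sumsq_mulVec_orth hVt w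
      rw [← h2, ← h1]
      exact EY.sum_eq_sum_castLE (min_le_right N M) (fun j => c j ^ 2)
        (fun j hj => by show c j ^ 2 = 0; rw [hcsupp j (by omega)]; ring)
    rw [hw2, Finset.mul_sum]
    apply Finset.sum_le_sum
    intro k _
    set kN : Fin N := Fin.castLE (min_le_left N M) k
    set kM : Fin M := Fin.castLE (min_le_right N M) k
    by_cases hk : (k : ℕ) < t + 1
    · have hSk : st ≤ S kN kM := hmono kN tN kM tM rfl rfl (show ((k : Fin (min N M)) : ℕ) ≤ t by omega)
      have h0 : 0 ≤ S kN kM := hnn kN kM rfl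
      have : st ^ 2 ≤ S kN kM ^ 2 := by nlinarith
      rw [mul_pow]
      nlinarith [sq_nonneg (c kM)]
    · have : c kM = 0 := hcsupp kM (show t + 1 ≤ ((k : Fin (min N M)) : ℕ) by omega)
      rw [this]
      ring_nf
      simp
  · -- part 2 : spectral norm of A - A_t equals st
    -- S' is S with the first t diagonal entries zeroed
    set S' : Matrix (Fin N) (Fin M) ℝ :=
      Matrix.of fun i j => if (i : ℕ) < t then 0 else S i j with hS'
    have hS'off : ∀ (i : Fin N) (j : Fin M), (i : ℕ) ≠ (j : ℕ) → S' i j = 0 := by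
      intro i j hij
      rw [hS']; simp only [Matrix.of_apply]
      rw [hoff i j hij]; split <;> rfl
    -- the truncation as a matrix product
    set T : Matrix (Fin N) (Fin M) ℝ :=
      ∑ k : Fin t, Matrix.single (⟨k, lt_of_lt_of_le k.isLt (le_of_lt (lt_of_lt_of_le ht (min_le_left N M)))⟩ : Fin N)
        (⟨k, lt_of_lt_of_le k.isLt (le_of_lt (lt_of_lt_of_le ht (min_le_right N M)))⟩ : Fin M)
        (S ⟨k, lt_of_lt_of_le k.isLt (le_of_lt (lt_of_lt_of_le ht (min_le_left N M)))⟩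
          ⟨k, lt_of_lt_of_le k.isLt (le_of_lt (lt_of_lt_of_le ht (min_le_right N M)))⟩) with hT
    have htrunc : svdTruncation U S V t ht.le = U * T * Vᵀ := by
      rw [hT, Matrix.mul_sum, Matrix.sum_mul]
      refine Finset.sum_congr rfl fun k _ => ?_
      ext a b
      rw [EY.sandwich_single]
      simp [vecMulVec_apply]
    have hST : S - T = S' := by
      ext i j
      rw [Matrix.sub_apply, hT, Matrix.sum_apply, hS']
      simp only [Matrix.of_apply]
      by_cases h1 : (i : ℕ) < t
      · by_cases h2 : (i : ℕ) = (j : ℕ)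
        · rw [if_pos h1, Finset.sum_eq_single (M := ℝ) (⟨(i : ℕ), h1⟩ : Fin t)]
          · rw [show (⟨(⟨(i : ℕ), h1⟩ : Fin t).val, lt_of_lt_of_le (⟨(i : ℕ), h1⟩ : Fin t).isLt (le_of_lt htN)⟩ : Fin N) = i from Fin.ext rfl]
            rw [show (⟨(⟨(i : ℕ), h1⟩ : Fin t).val, lt_of_lt_of_le (⟨(i : ℕ), h1⟩ : Fin t).isLt (le_of_lt htM)⟩ : Fin M) = j from Fin.ext h2]
            rw [Matrix.single_apply_same]
            ring
          · intro k _ hk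
            apply Matrix.single_apply_of_ne
            intro ⟨e1, e2⟩
            apply hk
            apply Fin.ext
            have : ((⟨(k : ℕ), lt_of_lt_of_le k.isLt (le_of_lt htN)⟩ : Fin N) : ℕ) = (i : ℕ) :=
              congrArg Fin.val e1
            simpa using this
          · intro hni; exact absurd (Finset.mem_univ _) hni
        · rw [if_pos h1, hoff i j h2, Finset.sum_eq_zero]
          · ring
          · intro k _
            apply Matrix.single_apply_of_ne
            intro ⟨e1, e2⟩
            apply h2
            have l1 : ((⟨(k : ℕ), lt_of_lt_of_le k.isLt (le_of_lt htN)⟩ : Fin N) : ℕ) = (i : ℕ) :=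
              congrArg Fin.val e1
            have l2 : ((⟨(k : ℕ), lt_of_lt_of_le k.isLt (le_of_lt htM)⟩ : Fin M) : ℕ) = (j : ℕ) :=
              congrArg Fin.val e2
            simp at l1 l2
            omega
      · rw [if_neg h1, Finset.sum_eq_zero]
        · ring
        · intro k _
          apply Matrix.single_apply_of_ne
          intro ⟨e1, e2⟩
          apply h1
          have l1 : ((⟨(k : ℕ), lt_of_lt_of_le k.isLt (le_of_lt htN)⟩ : Fin N) : ℕ) = (i : ℕ) :=
            congrArg Fin.val e1
          simp at l1
          omega
    have hdiff : A - svdTruncation U S V t ht.le = U * S' * Vᵀ := by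
      rw [hA, htrunc, ← Matrix.sub_mul, ← Matrix.mul_sub, hST]
    -- diagonal entries of S' are between 0 and st
    have hS'diag : ∀ k : Fin (min N M),
        0 ≤ S' (Fin.castLE (min_le_left N M) k) (Fin.castLE (min_le_right N M) k) ∧
        S' (Fin.castLE (min_le_left N M) k) (Fin.castLE (min_le_right N M) k) ≤ st := by
      intro k
      rw [hS']; simp only [Matrix.of_apply]
      split_ifs with hk
      · exact ⟨le_refl 0, hst0⟩
      · push_neg at hk
        constructor
        · exact hnn _ _ rfl
        · exact hmono tN _ tM _ rfl rfl (by simpa using hk)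
    have hmv : ∀ x : Fin M → ℝ, (U * S' * Vᵀ) *ᵥ x = U *ᵥ (S' *ᵥ (Vᵀ *ᵥ x)) := by
      intro x
      rw [mulVec_mulVec, mulVec_mulVec]
    rw [hdiff]
    apply le_antisymm
    · apply EY.spectralNorm_le_of _ hst0
      intro x
      rw [hmv, EY.sumsq_mulVec_orth hU, EY.sumsq_mulVec_diag hS'off]
      have hb : ∀ k : Fin (min N M),
          (S' (Fin.castLE (min_le_left N M) k) (Fin.castLE (min_le_right N M) k) *
            (Vᵀ *ᵥ x) (Fin.castLE (min_le_right N M) k)) ^ 2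
          ≤ st ^ 2 * (Vᵀ *ᵥ x) (Fin.castLE (min_le_right N M) k) ^ 2 := by
        intro k
        obtain ⟨h0, h1⟩ := hS'diag k
        rw [mul_pow]
        have hq : S' (Fin.castLE (min_le_left N M) k) (Fin.castLE (min_le_right N M) k) ^ 2
            ≤ st ^ 2 := by nlinarith
        nlinarith [sq_nonneg ((Vᵀ *ᵥ x) (Fin.castLE (min_le_right N M) k)), hq]
      calc ∑ k : Fin (min N M), (S' (Fin.castLE (min_le_left N M) k) (Fin.castLE (min_le_right N M) k) *
            (Vᵀ *ᵥ x) (Fin.castLE (min_le_right N M) k)) ^ 2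
          ≤ ∑ k : Fin (min N M), st ^ 2 * (Vᵀ *ᵥ x) (Fin.castLE (min_le_right N M) k) ^ 2 :=
            Finset.sum_le_sum fun k _ => hb k
        _ = st ^ 2 * ∑ k : Fin (min N M), (Vᵀ *ᵥ x) (Fin.castLE (min_le_right N M) k) ^ 2 := by
            rw [Finset.mul_sum]
        _ ≤ st ^ 2 * ∑ j, (Vᵀ *ᵥ x) j ^ 2 := by
            apply mul_le_mul_of_nonneg_left _ (sq_nonneg st)
            exact EY.sum_castLE_le (min_le_right N M) (fun j => (Vᵀ *ᵥ x) j ^ 2)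
              (fun j => sq_nonneg _)
        _ = st ^ 2 * ∑ j, x j ^ 2 := by rw [EY.sumsq_mulVec_orth hVt]
    · -- lower bound: use the t-th column of V
      set x : Fin M → ℝ := fun a => V a tM with hx
      have hxe : x = V *ᵥ Pi.single tM 1 := by
        rw [mulVec_single]
        funext a
        simp [hx]
      have hVtx : Vᵀ *ᵥ x = Pi.single tM 1 := by
        rw [hxe, mulVec_mulVec, hV, one_mulVec]
      have hxne : x ≠ 0 := by
        intro h0
        have : (Vᵀ *ᵥ x) tM = 0 := by rw [h0, mulVec_zero]; rfl
        rw [hVtx] at this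
        simp at this
      apply EY.le_spectralNorm_of _ hst0 x hxne
      have hx2 : ∑ j, x j ^ 2 = 1 := by
        have h1 : ∑ j, x j ^ 2 = ∑ j, (Vᵀ *ᵥ x) j ^ 2 := (EY.sumsq_mulVec_orth hVt x).symm
        rw [h1, hVtx]
        rw [Finset.sum_eq_single (M := ℝ) tM]
        · simp
        · intro j _ hj; rw [Pi.single_eq_of_ne hj]; ring
        · intro hni; exact absurd (Finset.mem_univ _) hni
      rw [hmv, EY.sumsq_mulVec_orth hU, EY.sumsq_mulVec_diag hS'off, hVtx, hx2, mul_one]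
      rw [Finset.sum_eq_single (M := ℝ) (⟨t, ht⟩ : Fin (min N M))]
      · have e2 : (Fin.castLE (min_le_right N M) (⟨t, ht⟩ : Fin (min N M))) = tM := Fin.ext rfl
        rw [e2, Pi.single_eq_same, mul_one, hS']
        simp only [Matrix.of_apply]
        rw [if_neg (by simp)]
        have e1 : (Fin.castLE (min_le_left N M) (⟨t, ht⟩ : Fin (min N M))) = tN := Fin.ext rfl
        rw [e1]
      · intro k _ hk
        have : (Fin.castLE (min_le_right N M) k) ≠ tM := by
          intro he
          have hval : (k : ℕ) = t := by simpa using congrArg Fin.val he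
          exact hk (Fin.ext hval)
        rw [Pi.single_eq_of_ne this, mul_zero]
        ring
      · intro hni; exact absurd (Finset.mem_univ _) hni
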